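/- Let M be symmetric positive definite and K symmetric positive semidefinite in ℝ^{m×m}, and consider the central difference scheme M(y^{n+1} − 2yⁿ + y^{n−1}) = −Δt² K yⁿ. If Δt² λ_max < 4, where λ_max is the largest generalized eigenvalue of K x = λ M x, then the discrete energy E^{n+1/2} = ½ ((y^{n+1}−yⁿ)/Δt)ᵀ M ((y^{n+1}−yⁿ)/Δt) + ½ (y^{n+1})ᵀ K yⁿ is conserved: E^{n+1/2} = E^{n−1/2} for all n. -/

import Mathlib

open Matrix

/-- Conservation of the discrete energy
`E^{n+1/2} = ½ ((yⁿ⁺¹−yⁿ)/Δt)ᵀ M ((yⁿ⁺¹−yⁿ)/Δt) + ½ (yⁿ⁺¹)ᵀ K yⁿ`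
for the central difference scheme `M(yⁿ⁺¹ − 2yⁿ + yⁿ⁻¹) = −Δt² K yⁿ`
under the stability condition `Δt² λ_max < 4` on the generalized eigenvalues
of `K x = λ M x`. -/
theorem stmt17 (m : ℕ) (M K : Matrix (Fin m) (Fin m) ℝ)
    (hM : M.PosDef) (hK : K.PosSemidef)
    (Δt : ℝ) (hΔt : 0 < Δt)
    (y : ℤ → (Fin m → ℝ))
    (hscheme : ∀ n : ℤ,
      M.mulVec (y (n + 1) - (2 : ℝ) • y n + y (n - 1)) = -((Δt ^ 2) • K.mulVec (y n)))
    (hstab : ∀ lam : ℝ, (∃ x : Fin m → ℝ, x ≠ 0 ∧ K.mulVec x = lam • M.mulVec x) →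
      Δt ^ 2 * lam < 4) :
    ∀ n : ℤ,
      (1/2) * ((Δt⁻¹ • (y (n + 1) - y n)) ⬝ᵥ M.mulVec (Δt⁻¹ • (y (n + 1) - y n)))
        + (1/2) * (y (n + 1) ⬝ᵥ K.mulVec (y n))
      = (1/2) * ((Δt⁻¹ • (y n - y (n - 1))) ⬝ᵥ M.mulVec (Δt⁻¹ • (y n - y (n - 1))))
        + (1/2) * (y n ⬝ᵥ K.mulVec (y (n - 1))) := by
  have hMt : Mᵀ = M := by
    rw [← Matrix.conjTranspose_eq_transpose_of_trivial]; exact hM.isHermitian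
  have hKt : Kᵀ = K := by
    rw [← Matrix.conjTranspose_eq_transpose_of_trivial]; exact hK.isHermitian
  have symM : ∀ u v : Fin m → ℝ, u ⬝ᵥ M.mulVec v = v ⬝ᵥ M.mulVec u := by
    intro u v
    rw [Matrix.dotProduct_mulVec, ← Matrix.mulVec_transpose, hMt, dotProduct_comm]
  have symK : ∀ u v : Fin m → ℝ, u ⬝ᵥ K.mulVec v = v ⬝ᵥ K.mulVec u := by
    intro u v
    rw [Matrix.dotProduct_mulVec, ← Matrix.mulVec_transpose, hKt, dotProduct_comm]
  intro n
  set a := y (n + 1)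
  set b := y n
  set c := y (n - 1)
  have key := congrArg (fun v => (a - c) ⬝ᵥ v) (hscheme n : M.mulVec (a - (2 : ℝ) • b + c) = -((Δt ^ 2) • K.mulVec b))
  simp only [Matrix.mulVec_add, Matrix.mulVec_sub, Matrix.mulVec_smul,
    dotProduct_add, dotProduct_sub, dotProduct_smul,
    dotProduct_neg, sub_dotProduct, smul_dotProduct, smul_eq_mul] at key ⊢
  have h1 := symM a b
  have h2 := symM a c
  have h3 := symM b c
  have h4 := symK b c
  have hΔ : Δt ≠ 0 := ne_of_gt hΔt
  field_simp at key ⊢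
  nlinarith [key, h1, h2, h3, h4, sq_nonneg Δt]
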